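/- arXiv:quant-ph/0612085 — 2 statements merged into one kernel-verified Lean document; each statement's English description precedes it below -/
import Mathlib

section
/- Let [a,b] ⊂ ℝ, n ≥ 1, h = (b-a)/n, a_i = a + ih. Let φ : [a_i, a_{i+1}] → ℝ be a continuous function, extended by 0 outside [a_i, a_{i+1}], giving f_i : [a,b] → ℝ. Suppose that for each m ≥ 1 the m-fold iterated integral of φ over [a_i, a_{i+1}] equals h^{r+m} V_m for constants V_m. Then for any k ≥ 1, the k-fold iterated integral ∫_a^b ∫_a^{y_{k-1}} ⋯ ∫_a^{y_1} f_i(y_0) dy_0 ⋯ dy_{k-1} equals h^{r+k} Σ_{m=1}^k (1/(k-m)!) V_m (n-i-1)^{k-m}. -/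
noncomputable def iterInt (f : ℝ → ℝ) (a : ℝ) : ℕ → ℝ → ℝ
  | 0 => f
  | m + 1 => fun x => ∫ y in a..x, iterInt f a m y

lemma iterInt_continuous (f : ℝ → ℝ) (hf : Continuous f) (c : ℝ) :
    ∀ m, Continuous (iterInt f c m)
  | 0 => hf
  | m + 1 => by
    have H := iterInt_continuous f hf c m
    exact intervalIntegral.continuous_primitive (fun a b => H.intervalIntegrable a b) c

/-- If `f` is continuous and vanishes below `c`, then all iterated integrals from `c`
vanish at points `≤ c`. -/
lemma iterInt_below (f : ℝ → ℝ) (hf : Continuous f) (c : ℝ)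
    (h0 : ∀ x, x ≤ c → f x = 0) : ∀ m, ∀ x, x ≤ c → iterInt f c m x = 0
  | 0, x, hx => h0 x hx
  | m + 1, x, hx => by
    show (∫ y in c..x, iterInt f c m y) = 0
    rw [intervalIntegral.integral_congr (g := fun _ => (0:ℝ))
      (fun y hy => iterInt_below f hf c h0 m y ?_)]
    · simp
    · rcases Set.mem_uIcc.1 hy with ⟨_, h2⟩ | ⟨_, h2⟩
      · exact h2.trans hx
      · exact h2

lemma iterInt_shift (f : ℝ → ℝ) (hf : Continuous f) (a c : ℝ) (hac : a ≤ c)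
    (h0 : ∀ x, x ≤ c → f x = 0) :
    ∀ m x, iterInt f a (m + 1) x = iterInt f c (m + 1) x := by
  intro m
  induction m with
  | zero =>
    intro x
    show (∫ y in a..x, f y) = ∫ y in c..x, f y
    rw [← intervalIntegral.integral_add_adjacent_intervals
      (hf.intervalIntegrable a c) (hf.intervalIntegrable c x)]
    rw [intervalIntegral.integral_congr (g := fun _ => (0:ℝ))
      (fun y hy => h0 y ?_)]
    · simp
    · rcases Set.mem_uIcc.1 hy with ⟨_, h2⟩ | ⟨_, h2⟩
      · exact h2
      · exact h2.trans hac
  | succ m ih =>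
    intro x
    show (∫ y in a..x, iterInt f a (m+1) y) = ∫ y in c..x, iterInt f c (m+1) y
    have hfun : iterInt f a (m+1) = iterInt f c (m+1) := funext ih
    rw [hfun]
    have hcont := iterInt_continuous f hf c (m+1)
    rw [← intervalIntegral.integral_add_adjacent_intervals
      (hcont.intervalIntegrable a c) (hcont.intervalIntegrable c x)]
    rw [intervalIntegral.integral_congr (g := fun _ => (0:ℝ))
      (fun y hy => iterInt_below f hf c h0 (m+1) y ?_)]
    · simp
    · rcases Set.mem_uIcc.1 hy with ⟨_, h2⟩ | ⟨_, h2⟩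
      · exact h2
      · exact h2.trans hac

/-- Above the support, iterated integrals are polynomials with Taylor-like coefficients. -/
lemma iterInt_above (f : ℝ → ℝ) (hf : Continuous f) (c d : ℝ) (hcd : c ≤ d)
    (h0 : ∀ x, d ≤ x → f x = 0) :
    ∀ m, ∀ x, d ≤ x → iterInt f c (m + 1) x
      = ∑ j ∈ Finset.Icc 1 (m + 1),
          iterInt f c j d * (x - d) ^ (m + 1 - j) / ((m + 1 - j).factorial : ℝ) := by
  intro m
  induction m with
  | zero =>
    intro x hx
    show (∫ y in c..x, f y) = _
    rw [← intervalIntegral.integral_add_adjacent_intervals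
      (hf.intervalIntegrable c d) (hf.intervalIntegrable d x)]
    rw [intervalIntegral.integral_congr (a := d) (b := x) (g := fun _ => (0:ℝ))
      (fun y hy => h0 y ?_)]
    · simp [iterInt]
    · rcases Set.mem_uIcc.1 hy with ⟨h2, _⟩ | ⟨h2, _⟩
      · exact h2
      · exact hx.trans h2
  | succ m ih =>
    intro x hx
    have hcont := iterInt_continuous f hf c (m+1)
    show (∫ y in c..x, iterInt f c (m+1) y) = _
    rw [← intervalIntegral.integral_add_adjacent_intervals
      (hcont.intervalIntegrable c d) (hcont.intervalIntegrable d x)]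
    have h1 : (∫ y in c..d, iterInt f c (m+1) y) = iterInt f c (m+2) d := rfl
    have h2 : (∫ y in d..x, iterInt f c (m+1) y)
        = ∑ j ∈ Finset.Icc 1 (m + 1),
            iterInt f c j d * (x - d) ^ (m + 2 - j) / ((m + 2 - j).factorial : ℝ) := by
      rw [intervalIntegral.integral_congr (g := fun y => ∑ j ∈ Finset.Icc 1 (m + 1),
          iterInt f c j d * (y - d) ^ (m + 1 - j) / ((m + 1 - j).factorial : ℝ))
          (fun y hy => ih y ?_)]
      · rw [intervalIntegral.integral_finset_sum]
        · refine Finset.sum_congr rfl (fun j hj => ?_)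
          obtain ⟨hj1, hj2⟩ := Finset.mem_Icc.1 hj
          have key : (∫ y in d..x, iterInt f c j d * (y - d) ^ (m + 1 - j)
              / ((m + 1 - j).factorial : ℝ))
              = iterInt f c j d / ((m + 1 - j).factorial : ℝ)
                * ∫ y in d..x, (y - d) ^ (m + 1 - j) := by
            rw [← intervalIntegral.integral_const_mul]
            congr 1; ext y; ring
          rw [key]
          have : (∫ y in d..x, (y - d) ^ (m + 1 - j))
              = (x - d) ^ (m + 1 - j + 1) / ((m + 1 - j : ℕ) + 1 : ℝ) := by
            rw [intervalIntegral.integral_comp_sub_right (fun y => y ^ (m + 1 - j)) d]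
            simp [integral_pow]
          rw [this]
          have e1 : m + 1 - j + 1 = m + 2 - j := by omega
          have e2 : (m + 2 - j).factorial = (m + 2 - j) * (m + 1 - j).factorial := by
            rw [← e1]; exact Nat.factorial_succ _
          rw [e1]
          have hfac : ((m + 1 - j).factorial : ℝ) ≠ 0 := by
            exact_mod_cast Nat.factorial_ne_zero _
          have hfac2 : ((m + 2 - j : ℕ) : ℝ) ≠ 0 := by
            have : 0 < m + 2 - j := by omega
            exact_mod_cast this.ne'
          have e3 : ((m + 1 - j : ℕ) + 1 : ℝ) = ((m + 2 - j : ℕ) : ℝ) := by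
            rw [← e1]; push_cast; ring
          have e4 : ((m + 2 - j).factorial : ℝ)
              = ((m + 2 - j : ℕ) : ℝ) * ((m + 1 - j).factorial : ℝ) := by
            rw [e2]; push_cast; ring
          rw [e3, e4]
          ring
        · intro j hj
          apply Continuous.intervalIntegrable
          fun_prop
      · rcases Set.mem_uIcc.1 hy with ⟨h2, _⟩ | ⟨h2, _⟩
        · exact h2
        · exact hx.trans h2
    rw [h1, h2]
    rw [Finset.sum_Icc_succ_top (by omega : 1 ≤ m + 2)]
    have : iterInt f c (m+2) d * (x - d) ^ (m + 2 - (m + 2)) / ((m + 2 - (m + 2)).factorial : ℝ)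
        = iterInt f c (m+2) d := by simp
    rw [this]
    ring

theorem stmt4 (a b : ℝ) (hab : a < b) (n k r i : ℕ) (hn : 1 ≤ n) (hk : 1 ≤ k) (hr : 1 ≤ r)
    (hi : i < n) (h ai ai1 : ℝ) (hh : h = (b - a) / n) (hai : ai = a + i * h)
    (hai1 : ai1 = a + (i + 1) * h) (f : ℝ → ℝ) (hf : Continuous f) (V : ℕ → ℝ)
    (hsupp : ∀ x, x ∉ Set.Icc ai ai1 → f x = 0)
    (hval : ∀ m, 1 ≤ m → iterInt f ai m ai1 = h ^ (r + m) * V m) :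
    iterInt f a k b
      = h ^ (r + k) * ∑ m ∈ Finset.Icc 1 k,
          (1 / ((k - m).factorial : ℝ)) * V m * ((n : ℝ) - i - 1) ^ (k - m) := by
  have hnpos : (0:ℝ) < n := by exact_mod_cast hn
  have hpos : 0 < h := by rw [hh]; exact div_pos (by linarith) hnpos
  have haai : a ≤ ai := by
    rw [hai]; nlinarith [Nat.cast_nonneg (α := ℝ) i]
  have haii : ai < ai1 := by rw [hai, hai1]; nlinarith
  have hb : b = a + n * h := by
    rw [hh]; field_simp; ring
  have hai1b : ai1 ≤ b := by
    rw [hai1, hb]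
    have : (i:ℝ) + 1 ≤ n := by exact_mod_cast hi
    nlinarith
  -- f vanishes on closed rays, using continuity at the endpoints
  have fai : f ai = 0 := by
    have h1 : Filter.Tendsto f (nhdsWithin ai (Set.Iio ai)) (nhds (f ai)) :=
      (hf.tendsto ai).mono_left nhdsWithin_le_nhds
    have h2 : Filter.Tendsto f (nhdsWithin ai (Set.Iio ai)) (nhds 0) := by
      apply Filter.Tendsto.congr' _ tendsto_const_nhds
      filter_upwards [self_mem_nhdsWithin] with y hy
      exact (hsupp y (fun hmem => absurd hmem.1 (not_le.2 hy))).symm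
    exact tendsto_nhds_unique h1 h2
  have fai1 : f ai1 = 0 := by
    have h1 : Filter.Tendsto f (nhdsWithin ai1 (Set.Ioi ai1)) (nhds (f ai1)) :=
      (hf.tendsto ai1).mono_left nhdsWithin_le_nhds
    have h2 : Filter.Tendsto f (nhdsWithin ai1 (Set.Ioi ai1)) (nhds 0) := by
      apply Filter.Tendsto.congr' _ tendsto_const_nhds
      filter_upwards [self_mem_nhdsWithin] with y hy
      exact (hsupp y (fun hmem => absurd hmem.2 (not_le.2 hy))).symm
    exact tendsto_nhds_unique h1 h2
  have hlo : ∀ x, x ≤ ai → f x = 0 := by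
    intro x hx
    rcases lt_or_eq_of_le hx with hx | hx
    · exact hsupp x (fun hmem => absurd hmem.1 (not_le.2 hx))
    · rw [hx, fai]
  have hhi : ∀ x, ai1 ≤ x → f x = 0 := by
    intro x hx
    rcases lt_or_eq_of_le hx with hx | hx
    · exact hsupp x (fun hmem => absurd hmem.2 (not_le.2 hx))
    · rw [← hx, fai1]
  obtain ⟨k', rfl⟩ : ∃ k', k = k' + 1 := ⟨k - 1, by omega⟩
  rw [iterInt_shift f hf a ai haai hlo k' b]
  rw [iterInt_above f hf ai ai1 haii.le hhi k' b (hai1b)]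
  rw [Finset.mul_sum]
  refine Finset.sum_congr rfl (fun j hj => ?_)
  obtain ⟨hj1, hj2⟩ := Finset.mem_Icc.1 hj
  rw [hval j hj1]
  have hbai1 : b - ai1 = ((n:ℝ) - i - 1) * h := by
    rw [hb, hai1]; ring
  rw [hbai1]
  have e : r + (k' + 1) = (r + j) + (k' + 1 - j) := by omega
  rw [e, pow_add, mul_pow]
  ring
end

section
/- Let k, n ≥ 1, set h̄ = (b-a)/(2kn) and a_i = a + i h̄ for i = 0,…,2kn. Let f_0,…,f_{2kn-1} : [a,b] → ℝ be functions with f_p supported on [a_p, a_{p+1}], each having m-fold iterated integral over its support equal to h̄^{r+m} V_m for all m ≥ 1 (with r ≥ 1 fixed). Let X_j(i) = n(k-j) + i - 1 and let c_0,…,c_{k-1} satisfy Σ_j c_j (1/2 + j/(2k) - x)^{k-1} ≡ 1. Then for any real numbers λ_0,…,λ_{kn-1}: Σ_{j=0}^{k-1} c_j ∫_a^b ∫_a^{y_{k-1}} ⋯ ∫_a^{y_1} Σ_{i=0}^{kn-1} λ_i f_{X_j(i)}(y_0) dy_0 ⋯ dy_{k-1} = (kn)^{-r} (b-a)^{k+r}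 2^{-r-1} (V_1/(k-1)!) · ((1/(kn)) Σ_{i=0}^{kn-1} λ_i). -/
lemma iterInt_cont {f : ℝ → ℝ} (hf : Continuous f) (A : ℝ) : ∀ m, Continuous (iterInt f A m)
  | 0 => hf
  | m + 1 => intervalIntegral.continuous_primitive
      (fun a b => ((iterInt_cont hf A m).intervalIntegrable a b)) A

lemma cont_zero_left {f : ℝ → ℝ} (hf : Continuous f) {A : ℝ}
    (h : ∀ y, y < A → f y = 0) : ∀ y, y ≤ A → f y = 0 := by
  intro y hy
  rcases lt_or_eq_of_le hy with h' | rfl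
  · exact h y h'
  · have h1 : Filter.Tendsto f (nhdsWithin y (Set.Iio y)) (nhds (f y)) :=
      (hf.tendsto y).mono_left nhdsWithin_le_nhds
    have h2 : Filter.Tendsto f (nhdsWithin y (Set.Iio y)) (nhds 0) := by
      apply Filter.Tendsto.congr' _ tendsto_const_nhds
      filter_upwards [self_mem_nhdsWithin] with z hz
      exact (h z hz).symm
    exact tendsto_nhds_unique h1 h2

lemma cont_zero_right {f : ℝ → ℝ} (hf : Continuous f) {B : ℝ}
    (h : ∀ y, B < y → f y = 0) : ∀ y, B ≤ y → f y = 0 := by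
  intro y hy
  have := cont_zero_left (f := fun x => f (-x)) (hf.comp continuous_neg) (A := -B)
    (fun z hz => h (-z) (by linarith)) (-y) (by linarith)
  simpa using this

lemma iterInt_zero_left {f : ℝ → ℝ} {A : ℝ} (h : ∀ y, y ≤ A → f y = 0) :
    ∀ m, ∀ x, x ≤ A → iterInt f A m x = 0
  | 0, x, hx => h x hx
  | m + 1, x, hx => by
    show (∫ y in A..x, iterInt f A m y) = 0
    rw [intervalIntegral.integral_congr (g := fun _ => (0:ℝ)) ?_,
      intervalIntegral.integral_const, smul_zero]
    intro y hy
    rw [Set.uIcc_of_ge hx] at hy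
    exact iterInt_zero_left h m y hy.2

lemma iterInt_base {f : ℝ → ℝ} (hf : Continuous f) {a A : ℝ} (ha : a ≤ A)
    (h : ∀ y, y ≤ A → f y = 0) : ∀ m x, iterInt f a m x = iterInt f A m x
  | 0, _ => rfl
  | m + 1, x => by
    show (∫ y in a..x, iterInt f a m y) = ∫ y in A..x, iterInt f A m y
    rw [intervalIntegral.integral_congr (g := iterInt f A m)
      (fun y _ => iterInt_base hf ha h m y)]
    rw [← intervalIntegral.integral_add_adjacent_intervals
        ((iterInt_cont hf A m).intervalIntegrable a A)
        ((iterInt_cont hf A m).intervalIntegrable A x)]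
    have hz : (∫ y in a..A, iterInt f A m y) = 0 := by
      rw [intervalIntegral.integral_congr (g := fun _ => (0:ℝ)) ?_,
        intervalIntegral.integral_const, smul_zero]
      intro y hy
      rw [Set.uIcc_of_le ha] at hy
      exact iterInt_zero_left h m y hy.2
    rw [hz, zero_add]

lemma iterInt_poly {f : ℝ → ℝ} (hf : Continuous f) {A B : ℝ}
    (h : ∀ y, B ≤ y → f y = 0) :
    ∀ m, ∀ x, B ≤ x → iterInt f A (m + 1) x
      = ∑ s ∈ Finset.range (m + 1),
          iterInt f A (s + 1) B * (x - B) ^ (m - s) / ((m - s).factorial : ℝ)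
  | 0, x, hx => by
    show (∫ y in A..x, f y) = _
    rw [Finset.sum_range_one]
    simp only [Nat.sub_zero, pow_zero, Nat.factorial_zero, Nat.cast_one, mul_one, div_one]
    rw [← intervalIntegral.integral_add_adjacent_intervals (hf.intervalIntegrable A B)
      (hf.intervalIntegrable B x)]
    have h2 : (∫ y in B..x, f y) = 0 := by
      rw [intervalIntegral.integral_congr (g := fun _ => (0:ℝ)) ?_,
        intervalIntegral.integral_const, smul_zero]
      intro y hy
      rw [Set.uIcc_of_le hx] at hy
      exact h y hy.1
    rw [h2, add_zero]
    rfl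
  | m + 1, x, hx => by
    have key : iterInt f A (m + 1 + 1) x
        = iterInt f A (m + 2) B + ∫ y in B..x, iterInt f A (m + 1) y := by
      show (∫ y in A..x, iterInt f A (m + 1) y) = _
      rw [← intervalIntegral.integral_add_adjacent_intervals
          ((iterInt_cont hf A (m + 1)).intervalIntegrable A B)
          ((iterInt_cont hf A (m + 1)).intervalIntegrable B x)]
      rfl
    rw [key]
    have h2 : (∫ y in B..x, iterInt f A (m + 1) y)
        = ∑ s ∈ Finset.range (m + 1),
            iterInt f A (s + 1) B * (x - B) ^ (m - s + 1) / ((m - s + 1).factorial : ℝ) := by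
      rw [intervalIntegral.integral_congr (g := fun y => ∑ s ∈ Finset.range (m + 1),
            iterInt f A (s + 1) B / ((m - s).factorial : ℝ) * (y - B) ^ (m - s)) ?_]
      · rw [intervalIntegral.integral_finset_sum (fun s _ =>
          (Continuous.intervalIntegrable (by continuity) _ _))]
        apply Finset.sum_congr rfl
        intro s _
        rw [intervalIntegral.integral_const_mul]
        have h3 : (∫ y in B..x, (y - B) ^ (m - s)) = (x - B) ^ (m - s + 1) / ((m - s : ℕ) + 1) := by
          rw [intervalIntegral.integral_comp_sub_right (fun u => u ^ (m - s)) B, sub_self,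
            integral_pow]
          simp
        rw [h3, Nat.factorial_succ, div_mul_div_comm]
        push_cast
        ring
      · intro y hy
        rw [Set.uIcc_of_le hx] at hy
        rw [iterInt_poly hf h m y hy.1]
        apply Finset.sum_congr rfl
        intro s _
        ring
    rw [h2]
    conv_rhs => rw [Finset.sum_range_succ]
    have h4 : ∀ s ∈ Finset.range (m + 1),
        iterInt f A (s + 1) B * (x - B) ^ (m + 1 - s) / ((m + 1 - s).factorial : ℝ)
          = iterInt f A (s + 1) B * (x - B) ^ (m - s + 1) / ((m - s + 1).factorial : ℝ) := by
      intro s hs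
      have hms : m + 1 - s = m - s + 1 := by
        have := Finset.mem_range.mp hs; omega
      rw [hms]
    rw [Finset.sum_congr rfl h4]
    simp [Nat.sub_self]
    ring

lemma iterInt_const_mul {f : ℝ → ℝ} (c a : ℝ) :
    ∀ m x, iterInt (fun y => c * f y) a m x = c * iterInt f a m x
  | 0, _ => rfl
  | m + 1, x => by
    show (∫ y in a..x, iterInt (fun y => c * f y) a m y) = c * ∫ y in a..x, iterInt f a m y
    rw [intervalIntegral.integral_congr (g := fun y => c * iterInt f a m y)
        (fun y _ => iterInt_const_mul c a m y), intervalIntegral.integral_const_mul]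

lemma iterInt_sum {ι : Type*} (s : Finset ι) (g : ι → ℝ → ℝ)
    (hg : ∀ i ∈ s, Continuous (g i)) (a : ℝ) :
    ∀ m x, iterInt (fun y => ∑ i ∈ s, g i y) a m x = ∑ i ∈ s, iterInt (g i) a m x
  | 0, _ => rfl
  | m + 1, x => by
    show (∫ y in a..x, iterInt (fun y => ∑ i ∈ s, g i y) a m y) = _
    rw [intervalIntegral.integral_congr (g := fun y => ∑ i ∈ s, iterInt (g i) a m y)
        (fun y _ => iterInt_sum s g hg a m y)]
    rw [intervalIntegral.integral_finset_sum
      (fun i hi => ((iterInt_cont (hg i hi) a m).intervalIntegrable _ _))]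
    rfl

lemma moments (k : ℕ) (hk : 1 ≤ k) (c : ℕ → ℝ) (t : ℕ → ℝ)
    (hw : ∀ x : ℝ, ∑ j ∈ Finset.range k, c j * (t j - x) ^ (k - 1) = 1) :
    ∀ m ≤ k - 1, ∑ j ∈ Finset.range k, c j * t j ^ m = if m = k - 1 then 1 else 0 := by
  intro m hm
  set d := k - 1 - m with hd
  have hcoeff : (∑ j ∈ Finset.range k,
      Polynomial.C (c j) * (Polynomial.C (t j) - Polynomial.X) ^ (k - 1) : Polynomial ℝ)
        = Polynomial.C 1 := by
    apply Polynomial.funext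
    intro x
    simp only [Polynomial.eval_finset_sum, Polynomial.eval_mul, Polynomial.eval_pow,
      Polynomial.eval_sub, Polynomial.eval_C, Polynomial.eval_X]
    exact hw x
  have h2 := congrArg (fun P => Polynomial.coeff P d) hcoeff
  simp only [Polynomial.finset_sum_coeff, Polynomial.coeff_C_mul] at h2
  have h3 : ∀ j, ((Polynomial.C (t j) - Polynomial.X : Polynomial ℝ) ^ (k - 1)).coeff d
      = (-1 : ℝ) ^ (k - 1) * ((-(t j)) ^ m * ((k - 1).choose d : ℝ)) := by
    intro j
    have he : (Polynomial.C (t j) - Polynomial.X : Polynomial ℝ)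
        = -(Polynomial.X + Polynomial.C (-(t j))) := by
      simp [sub_eq_add_neg, add_comm]
    rw [he, neg_pow]
    have hc : ((-1 : Polynomial ℝ) ^ (k - 1)) = Polynomial.C ((-1 : ℝ) ^ (k - 1)) := by
      simp
    rw [hc, Polynomial.coeff_C_mul, Polynomial.coeff_X_add_C_pow]
    have : k - 1 - d = m := by omega
    rw [this]
  simp only [h3] at h2
  have hrhs : (Polynomial.C (1 : ℝ)).coeff d = if d = 0 then 1 else 0 := by
    rw [Polynomial.coeff_C]
  rw [hrhs] at h2
  have hfact : ∑ j ∈ Finset.range k, c j * ((-1 : ℝ) ^ (k - 1) * ((-(t j)) ^ m * ((k - 1).choose d : ℝ)))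
      = ((-1 : ℝ) ^ (k - 1) * (-1 : ℝ) ^ m * ((k - 1).choose d : ℝ))
        * ∑ j ∈ Finset.range k, c j * t j ^ m := by
    rw [Finset.mul_sum]
    apply Finset.sum_congr rfl
    intro j _
    rw [neg_pow (t j) m]
    ring
  rw [hfact] at h2
  have hch : ((k - 1).choose d : ℝ) ≠ 0 := by
    have : d ≤ k - 1 := by omega
    exact Nat.cast_ne_zero.mpr (Nat.choose_pos this).ne'
  by_cases hcase : m = k - 1
  · have hd0 : d = 0 := by omega
    rw [hd0, if_pos rfl] at h2
    rw [if_pos hcase]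
    have hsign : (-1 : ℝ) ^ (k - 1) * (-1 : ℝ) ^ m = 1 := by
      rw [hcase, ← pow_add]
      exact Even.neg_one_pow ⟨k - 1, by ring⟩
    rw [Nat.choose_zero_right] at h2
    rw [hsign] at h2
    simpa using h2
  · have hd0 : d ≠ 0 := by omega
    rw [if_neg hd0] at h2
    rw [if_neg hcase]
    have hne : ((-1 : ℝ) ^ (k - 1) * (-1 : ℝ) ^ m * ((k - 1).choose d : ℝ)) ≠ 0 := by
      apply mul_ne_zero
      · apply mul_ne_zero
        · exact pow_ne_zero _ (by norm_num)
        · exact pow_ne_zero _ (by norm_num)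
      · exact hch
    exact (mul_eq_zero.mp h2).resolve_left hne

lemma moment_shift (k : ℕ) (hk : 1 ≤ k) (c t : ℕ → ℝ)
    (hM : ∀ m ≤ k - 1, ∑ j ∈ Finset.range k, c j * t j ^ m = if m = k - 1 then 1 else 0)
    (z : ℝ) : ∀ d ≤ k - 1,
      ∑ j ∈ Finset.range k, c j * (t j - z) ^ d = if d = k - 1 then 1 else 0 := by
  intro d hd
  have e1 : ∀ j, c j * (t j - z) ^ d = ∑ m ∈ Finset.range (d + 1),
      ((-1 : ℝ) ^ (m + d) * z ^ (d - m) * (d.choose m : ℝ)) * (c j * t j ^ m) := by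
    intro j
    rw [sub_pow, Finset.mul_sum]
    apply Finset.sum_congr rfl
    intro m _
    ring
  have step : ∑ j ∈ Finset.range k, c j * (t j - z) ^ d
      = ∑ m ∈ Finset.range (d + 1),
          ((-1 : ℝ) ^ (m + d) * z ^ (d - m) * (d.choose m : ℝ))
            * ∑ j ∈ Finset.range k, c j * t j ^ m := by
    rw [Finset.sum_congr rfl (fun j _ => e1 j), Finset.sum_comm]
    exact Finset.sum_congr rfl (fun m _ => (Finset.mul_sum _ _ _).symm)
  rw [step]
  have step2 : ∀ m ∈ Finset.range (d + 1),
      ((-1 : ℝ) ^ (m + d) * z ^ (d - m) * (d.choose m : ℝ))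
          * ∑ j ∈ Finset.range k, c j * t j ^ m
        = ((-1 : ℝ) ^ (m + d) * z ^ (d - m) * (d.choose m : ℝ))
          * (if m = k - 1 then 1 else 0) := by
    intro m hm
    have hm' := Finset.mem_range.mp hm
    rw [hM m (by omega)]
  rw [Finset.sum_congr rfl step2]
  by_cases hcase : d = k - 1
  · rw [if_pos hcase]
    rw [Finset.sum_eq_single d]
    · rw [if_pos hcase, Nat.choose_self, Nat.sub_self, pow_zero]
      have : (-1 : ℝ) ^ (d + d) = 1 := Even.neg_one_pow ⟨d, rfl⟩
      rw [this]
      norm_num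
    · intro m hm hne
      have : m ≠ k - 1 := by
        have := Finset.mem_range.mp hm; omega
      rw [if_neg this, mul_zero]
    · intro hd'
      exact absurd (Finset.self_mem_range_succ d) hd'
  · rw [if_neg hcase]
    apply Finset.sum_eq_zero
    intro m hm
    have : m ≠ k - 1 := by
      have := Finset.mem_range.mp hm; omega
    rw [if_neg this, mul_zero]

theorem stmt11 (a b : ℝ) (hab : a < b) (k n r : ℕ) (hk : 1 ≤ k) (hn : 1 ≤ n) (hr : 1 ≤ r)
    (hbar : ℝ) (hhbar : hbar = (b - a) / (2 * k * n))
    (f : ℕ → ℝ → ℝ) (hcont : ∀ p, Continuous (f p))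
    (hsupp : ∀ p < 2 * k * n, ∀ x, x ∉ Set.Icc (a + p * hbar) (a + (p + 1) * hbar) → f p x = 0)
    (V : ℕ → ℝ)
    (hval : ∀ p < 2 * k * n, ∀ m, 1 ≤ m →
      iterInt (f p) (a + p * hbar) m (a + (p + 1) * hbar) = hbar ^ (r + m) * V m)
    (c : ℕ → ℝ)
    (hw : ∀ x : ℝ, ∑ j ∈ Finset.range k, c j * (1 / 2 + (j : ℝ) / (2 * k) - x) ^ (k - 1) = 1)
    (lam : ℕ → ℝ) :
    ∑ j ∈ Finset.range k,
        c j * iterInt (fun y => ∑ i ∈ Finset.range (k * n), lam i * f (n * (k - j) + i - 1) y) a k b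
      = (1 / ((k * n : ℕ) : ℝ)) ^ r * (b - a) ^ (k + r) * (1 / 2) ^ (r + 1)
          * (V 1 / ((k - 1).factorial : ℝ))
          * ((1 / ((k * n : ℕ) : ℝ)) * ∑ i ∈ Finset.range (k * n), lam i) := by
  have hkR : (0:ℝ) < k := by exact_mod_cast hk
  have hnR : (0:ℝ) < n := by exact_mod_cast hn
  have hba : (0:ℝ) < b - a := sub_pos.mpr hab
  have hbarpos : 0 < hbar := by rw [hhbar]; positivity
  have hb : b = a + ((2 * k * n : ℕ) : ℝ) * hbar := by
    rw [hhbar]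
    push_cast
    field_simp
    ring
  -- the key evaluation of a single iterated integral
  have key : ∀ j ∈ Finset.range k, ∀ i ∈ Finset.range (k * n),
      iterInt (f (n * (k - j) + i - 1)) a k b
        = hbar ^ (k + r) * ∑ s ∈ Finset.range k,
            V (s + 1) * ((k : ℝ) * n + n * j - i) ^ (k - 1 - s)
              / ((k - 1 - s).factorial : ℝ) := by
    intro j hj i hi
    have hj' := Finset.mem_range.mp hj
    have hi' := Finset.mem_range.mp hi
    set p := n * (k - j) + i - 1 with hp
    have hnkj : 1 ≤ n * (k - j) := Nat.one_le_iff_ne_zero.mpr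
      (Nat.mul_ne_zero (by omega) (by omega))
    have hmul1 : n * (k - j) ≤ n * k := Nat.mul_le_mul_left n (Nat.sub_le k j)
    have hc1 : n * k = k * n := Nat.mul_comm n k
    have hc2 : 2 * k * n = 2 * (k * n) := by ring
    have hge1 : 1 ≤ n * (k - j) + i := by omega
    have hp1 : p + 1 = n * (k - j) + i := by omega
    have hplt : p < 2 * k * n := by omega
    have haA : a ≤ a + (p : ℝ) * hbar :=
      le_add_of_nonneg_right (by positivity)
    have hzl : ∀ y, y ≤ a + (p : ℝ) * hbar → f p y = 0 := by
      apply cont_zero_left (hcont p)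
      intro y hy
      apply hsupp p hplt
      rw [Set.mem_Icc]
      push_neg
      intro hcle
      linarith
    have hzr : ∀ y, a + ((p : ℝ) + 1) * hbar ≤ y → f p y = 0 := by
      apply cont_zero_right (hcont p)
      intro y hy
      apply hsupp p hplt
      rw [Set.mem_Icc]
      push_neg
      intro hcle
      linarith [hbarpos]
    have hBb : a + ((p : ℝ) + 1) * hbar ≤ b := by
      rw [hb]
      have hcast : (p : ℝ) + 1 ≤ ((2 * k * n : ℕ) : ℝ) := by
        have h' : (p + 1 : ℕ) ≤ 2 * k * n := hplt
        exact_mod_cast h'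
      have := mul_le_mul_of_nonneg_right hcast hbarpos.le
      linarith
    rw [iterInt_base (hcont p) haA hzl k b]
    have hk1 : k - 1 + 1 = k := by omega
    have hpoly := iterInt_poly (A := a + (p : ℝ) * hbar) (hcont p) hzr (k - 1) b hBb
    rw [hk1] at hpoly
    rw [hpoly, Finset.mul_sum]
    apply Finset.sum_congr rfl
    intro s hs
    have hs' := Finset.mem_range.mp hs
    rw [hval p hplt (s + 1) (by omega)]
    have hpc : (p : ℝ) = (n : ℝ) * ((k : ℝ) - (j : ℝ)) + (i : ℝ) - 1 := by
      rw [hp]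
      push_cast [Nat.cast_sub hge1, Nat.cast_sub hj'.le]
      ring
    have hbB : b - (a + ((p : ℝ) + 1) * hbar) = ((k : ℝ) * n + n * j - i) * hbar := by
      rw [hb, hpc]
      push_cast
      ring
    rw [hbB, mul_pow]
    have hexp : hbar ^ (r + (s + 1)) * hbar ^ (k - 1 - s) = hbar ^ (k + r) := by
      rw [← pow_add]
      congr 1
      omega
    conv_rhs => rw [← hexp]
    ring
  -- linearity
  have hlin : ∀ j ∈ Finset.range k,
      iterInt (fun y => ∑ i ∈ Finset.range (k * n), lam i * f (n * (k - j) + i - 1) y) a k b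
        = ∑ i ∈ Finset.range (k * n), lam i * iterInt (f (n * (k - j) + i - 1)) a k b := by
    intro j _
    rw [iterInt_sum (Finset.range (k * n)) (fun i y => lam i * f (n * (k - j) + i - 1) y)
      (fun i _ => continuous_const.mul (hcont _)) a k b]
    exact Finset.sum_congr rfl (fun i _ => iterInt_const_mul (lam i) a k b)
  have stepA : ∀ j ∈ Finset.range k,
      c j * iterInt (fun y => ∑ i ∈ Finset.range (k * n), lam i * f (n * (k - j) + i - 1) y) a k b
        = ∑ i ∈ Finset.range (k * n), ∑ s ∈ Finset.range k,
            (lam i * hbar ^ (k + r) * (V (s + 1) / ((k - 1 - s).factorial : ℝ)))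
              * (c j * ((k : ℝ) * n + n * j - i) ^ (k - 1 - s)) := by
    intro j hj
    rw [hlin j hj, Finset.mul_sum]
    apply Finset.sum_congr rfl
    intro i hi
    rw [key j hj i hi]
    simp only [Finset.mul_sum]
    apply Finset.sum_congr rfl
    intro s _
    ring
  rw [Finset.sum_congr rfl stepA]
  rw [Finset.sum_comm]
  rw [Finset.sum_congr rfl (fun i _ => Finset.sum_comm
    (s := Finset.range k) (t := Finset.range k)
    (f := fun j s => (lam i * hbar ^ (k + r) * (V (s + 1) / ((k - 1 - s).factorial : ℝ)))
      * (c j * ((k : ℝ) * n + n * j - i) ^ (k - 1 - s))))]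
  -- moment identities
  have hM := moments k hk c (fun j => 1 / 2 + (j : ℝ) / (2 * (k : ℝ))) hw
  have hMshift := moment_shift k hk c (fun j => 1 / 2 + (j : ℝ) / (2 * (k : ℝ))) hM
  have inner : ∀ i ∈ Finset.range (k * n), ∀ s ∈ Finset.range k,
      ∑ j ∈ Finset.range k,
          (lam i * hbar ^ (k + r) * (V (s + 1) / ((k - 1 - s).factorial : ℝ)))
            * (c j * ((k : ℝ) * n + n * j - i) ^ (k - 1 - s))
        = (lam i * hbar ^ (k + r) * (V (s + 1) / ((k - 1 - s).factorial : ℝ)))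
            * ((2 * (k : ℝ) * n) ^ (k - 1 - s) * (if k - 1 - s = k - 1 then 1 else 0)) := by
    intro i hi s hs
    have hs' := Finset.mem_range.mp hs
    rw [← Finset.mul_sum]
    congr 1
    have hu : ∀ j : ℕ, ((k : ℝ) * n + n * j - i)
        = (2 * (k : ℝ) * n) * ((1 / 2 + (j : ℝ) / (2 * (k : ℝ))) - (i : ℝ) / (2 * (k : ℝ) * n)) := by
      intro j
      field_simp
    calc ∑ j ∈ Finset.range k, c j * ((k : ℝ) * n + n * j - i) ^ (k - 1 - s)
        = ∑ j ∈ Finset.range k, (2 * (k : ℝ) * n) ^ (k - 1 - s)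
            * (c j * ((1 / 2 + (j : ℝ) / (2 * (k : ℝ))) - (i : ℝ) / (2 * (k : ℝ) * n)) ^ (k - 1 - s)) := by
          apply Finset.sum_congr rfl
          intro j _
          rw [hu j, mul_pow]
          ring
      _ = (2 * (k : ℝ) * n) ^ (k - 1 - s)
            * ∑ j ∈ Finset.range k, c j * ((1 / 2 + (j : ℝ) / (2 * (k : ℝ))) - (i : ℝ) / (2 * (k : ℝ) * n)) ^ (k - 1 - s) :=
          (Finset.mul_sum _ _ _).symm
      _ = (2 * (k : ℝ) * n) ^ (k - 1 - s) * (if k - 1 - s = k - 1 then 1 else 0) := by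
          exact congrArg (fun w => (2 * (k : ℝ) * n) ^ (k - 1 - s) * w)
            (hMshift ((i : ℝ) / (2 * (k : ℝ) * n)) (k - 1 - s) (by omega))
  rw [Finset.sum_congr rfl (fun i hi => Finset.sum_congr rfl (fun s hs => inner i hi s hs))]
  have sEval : ∀ i ∈ Finset.range (k * n),
      ∑ s ∈ Finset.range k,
          (lam i * hbar ^ (k + r) * (V (s + 1) / ((k - 1 - s).factorial : ℝ)))
            * ((2 * (k : ℝ) * n) ^ (k - 1 - s) * (if k - 1 - s = k - 1 then 1 else 0))
        = lam i * hbar ^ (k + r) * (V 1 / ((k - 1).factorial : ℝ)) * (2 * (k : ℝ) * n) ^ (k - 1) := by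
    intro i _
    rw [Finset.sum_eq_single 0]
    · norm_num
    · intro s hs hne
      have hcond : ¬ (k - 1 - s = k - 1) := by
        have := Finset.mem_range.mp hs
        omega
      rw [if_neg hcond, mul_zero, mul_zero]
    · intro h0
      exact absurd (Finset.mem_range.mpr (by omega)) h0
  rw [Finset.sum_congr rfl sEval]
  have hsc : hbar ^ (k + r) * (2 * (k : ℝ) * n) ^ (k - 1)
      = (1 / ((k * n : ℕ) : ℝ)) ^ r * (b - a) ^ (k + r) * ((1 : ℝ) / 2) ^ (r + 1)
        * (1 / ((k * n : ℕ) : ℝ)) := by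
    have hkn : ((k * n : ℕ) : ℝ) = (k : ℝ) * n := by push_cast; ring
    rw [hhbar, hkn, div_pow]
    have hsplit : (2 * (k : ℝ) * n) ^ (k + r)
        = (2 * (k : ℝ) * n) ^ (k - 1) * (2 * (k : ℝ) * n) ^ (r + 1) := by
      rw [← pow_add]
      congr 1
      omega
    rw [hsplit]
    have h1 : (2 * (k : ℝ) * n) ^ (k - 1) ≠ 0 := pow_ne_zero _ (by positivity)
    have h2 : (2 * (k : ℝ) * n) ^ (r + 1) ≠ 0 := pow_ne_zero _ (by positivity)
    have h3 : ((2 : ℝ) * (k : ℝ) * n) ^ (r + 1) = 2 ^ (r + 1) * ((k : ℝ) * n) ^ (r + 1) := by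
      rw [mul_assoc, mul_pow]
    field_simp
    rw [h3, mul_pow]
    ring
    have hA : (k : ℝ) ^ r * ((k : ℝ)⁻¹) ^ r = 1 := by
      rw [← mul_pow, mul_inv_cancel₀ hkR.ne', one_pow]
    have hB : (n : ℝ) ^ r * ((n : ℝ)⁻¹) ^ r = 1 := by
      rw [← mul_pow, mul_inv_cancel₀ hnR.ne', one_pow]
    have hC : ((1 : ℝ) / 2) ^ r * 2 ^ r = 1 := by
      rw [← mul_pow]; norm_num
    linear_combination (-((k : ℝ) * n)) * ((n : ℝ) ^ r * ((n : ℝ)⁻¹) ^ r * ((1 : ℝ) / 2) ^ r * 2 ^ r * hA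
      + ((1 : ℝ) / 2) ^ r * 2 ^ r * hB + hC)
  rw [← Finset.sum_mul, ← Finset.sum_mul, ← Finset.sum_mul]
  rw [show (∑ i ∈ Finset.range (k * n), lam i) * hbar ^ (k + r)
        * (V 1 / ((k - 1).factorial : ℝ)) * (2 * (k : ℝ) * n) ^ (k - 1)
      = (hbar ^ (k + r) * (2 * (k : ℝ) * n) ^ (k - 1))
        * ((V 1 / ((k - 1).factorial : ℝ)) * (∑ i ∈ Finset.range (k * n), lam i)) from by ring]
  rw [hsc]
  ring
end
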